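/- The injective stabilization of a half-exact functor is half-exact: if F : 𝒜 → Ab is additive and for every short exact sequence 0 → A → B → C → 0 the sequence F(A) → F(B) → F(C) is exact, then for every short exact sequence the sequence F̄(A) → F̄(B) → F̄(C) is exact. -/

import Mathlib

open CategoryTheory CategoryTheory.Limits

universe u v

/-- The injective stabilization of a half-exact functor is half-exact: if `F` sends every
short exact sequence `0 → A → B → C → 0` to an exact sequence `F(A) → F(B) → F(C)`, then
for any short exact sequence and any embeddings of the three terms into injectives, the
induced sequence of kernels `F̄(A) → F̄(B) → F̄(C)` is exact (stated elementwise: every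
element of `F̄(B)` killed by `F(g)` is the image under `F(f)` of an element of `F̄(A)`). -/
theorem injective_stabilization_half_exact
    {𝒜 : Type u} [Category.{v} 𝒜] [Abelian 𝒜] [EnoughInjectives 𝒜]
    (F : 𝒜 ⥤ AddCommGrpCat.{v}) [F.Additive]
    (hF : ∀ (S : ShortComplex 𝒜), S.ShortExact → (S.map F).Exact)
    (S : ShortComplex 𝒜) (hS : S.ShortExact)
    {IA IB IC : 𝒜} (ιA : S.X₁ ⟶ IA) (ιB : S.X₂ ⟶ IB) (ιC : S.X₃ ⟶ IC)
    [Mono ιA] [Mono ιB] [Mono ιC] [Injective IA] [Injective IB] [Injective IC]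
    (y : F.obj S.X₂) (hy : F.map ιB y = 0) (hgy : F.map S.g y = 0) :
    ∃ x : F.obj S.X₁, F.map ιA x = 0 ∧ F.map S.f x = y := by
  have hmono : Mono S.f := hS.mono_f
  obtain ⟨x, hx⟩ := ((S.map F).ab_exact_iff).mp (hF S hS) y hgy
  have hx' : F.map S.f x = y := hx
  refine ⟨x, ?_, hx'⟩
  -- extend ιA along the mono S.f ≫ ιB
  have : Mono (S.f ≫ ιB) := mono_comp _ _
  let k : IB ⟶ IA := Injective.factorThru ιA (S.f ≫ ιB)
  have hk : (S.f ≫ ιB) ≫ k = ιA := Injective.comp_factorThru ιA (S.f ≫ ιB)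
  calc F.map ιA x = F.map ((S.f ≫ ιB) ≫ k) x := by rw [hk]
    _ = F.map k (F.map ιB (F.map S.f x)) := by simp; rfl
    _ = 0 := by rw [hx', hy, map_zero]
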